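/- arXiv:1003.1773 — 2 statements merged into one kernel-verified Lean document; each statement's English description precedes it below -/
import Mathlib

section
/- Let V be a finite-dimensional real vector space and let E ⊆ 𝕋_ℂ V be a complex subspace which is isotropic for the ℂ-bilinear extension of the standard pairing, satisfies E ∩ σ(E) = 0, and has dim_ℂ E = dim_ℝ V. Then there exists a unique almost generalized complex structure J on V whose complexification J_ℂ has E as its i-eigenspace, i.e. ker(J_ℂ − i·id) = E. -/
open TensorProduct

noncomputable section

/-- The generalized tangent space `𝕋V = V ⊕ V*`, where `V* = Hom_ℝ(V, ℝ)`. -/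
abbrev GTan (V : Type*) [AddCommGroup V] [Module ℝ V] := V × (V →ₗ[ℝ] ℝ)

/-- The standard pairing `⟨(u,α),(v,β)⟩ = (α(v)+β(u))/2` on `𝕋V`. -/
def stdPairing (V : Type*) [AddCommGroup V] [Module ℝ V] :
    LinearMap.BilinForm ℝ (GTan V) :=
  LinearMap.mk₂ ℝ (fun x y => (x.2 y.1 + y.2 x.1) / 2)
    (fun x x' y => by simp [LinearMap.add_apply]; ring)
    (fun c x y => by simp [LinearMap.smul_apply, smul_eq_mul]; ring)
    (fun x y y' => by simp [map_add]; ring)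
    (fun c x y => by simp [map_smul, smul_eq_mul]; ring)

/-- The ℂ-bilinear extension of the standard pairing to `𝕋_ℂ V = ℂ ⊗_ℝ 𝕋V`. -/
def stdPairingC (V : Type*) [AddCommGroup V] [Module ℝ V] :
    LinearMap.BilinForm ℂ (ℂ ⊗[ℝ] GTan V) :=
  (stdPairing V).baseChange ℂ

/-- The conjugation `σ` on `𝕋_ℂ V`, induced by complex conjugation on `ℂ`
and the identity on `𝕋V`. -/
def conjT (V : Type*) [AddCommGroup V] [Module ℝ V] :
    ℂ ⊗[ℝ] GTan V →ₗ[ℝ] ℂ ⊗[ℝ] GTan V :=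
  TensorProduct.map Complex.conjAe.toLinearMap LinearMap.id

/-- The `i`-eigenspace `ker (J_ℂ - i·id)` of the complexification `J_ℂ` of `J`. -/
def iEigenspace {V : Type*} [AddCommGroup V] [Module ℝ V] (J : GTan V →ₗ[ℝ] GTan V) :
    Submodule ℂ (ℂ ⊗[ℝ] GTan V) :=
  LinearMap.ker (J.baseChange ℂ -
    (Complex.I • LinearMap.id : ℂ ⊗[ℝ] GTan V →ₗ[ℂ] ℂ ⊗[ℝ] GTan V))


namespace GCAux

variable (V : Type*) [AddCommGroup V] [Module ℝ V]

@[simp] lemma conjT_tmul (c : ℂ) (m : GTan V) :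
    conjT V (c ⊗ₜ[ℝ] m) = (starRingEnd ℂ c) ⊗ₜ[ℝ] m := rfl

variable {V}

lemma conjT_conjT (x : ℂ ⊗[ℝ] GTan V) : conjT V (conjT V x) = x := by
  induction x using TensorProduct.induction_on with
  | zero => simp
  | tmul c m => simp
  | add a b ha hb => simp [map_add, ha, hb]

lemma conjT_smul (c : ℂ) (x : ℂ ⊗[ℝ] GTan V) :
    conjT V (c • x) = (starRingEnd ℂ c) • conjT V x := by
  induction x using TensorProduct.induction_on with
  | zero => simp
  | tmul d m => simp [smul_tmul', smul_eq_mul, map_mul]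
  | add a b ha hb => simp [smul_add, map_add, ha, hb]

/-- inclusion of real points -/
def iota : GTan V →ₗ[ℝ] ℂ ⊗[ℝ] GTan V := (TensorProduct.mk ℝ ℂ (GTan V)) 1

@[simp] lemma iota_apply (m : GTan V) : (iota : GTan V →ₗ[ℝ] ℂ ⊗[ℝ] GTan V) m = (1 : ℂ) ⊗ₜ[ℝ] m := rfl

/-- real part retraction -/
def pre : ℂ ⊗[ℝ] GTan V →ₗ[ℝ] GTan V :=
  (TensorProduct.lid ℝ (GTan V)).toLinearMap ∘ₗ
    TensorProduct.map Complex.reLm LinearMap.id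

@[simp] lemma pre_tmul (c : ℂ) (m : GTan V) :
    (pre : ℂ ⊗[ℝ] GTan V →ₗ[ℝ] GTan V) (c ⊗ₜ[ℝ] m) = c.re • m := rfl

@[simp] lemma pre_iota (m : GTan V) :
    (pre : ℂ ⊗[ℝ] GTan V →ₗ[ℝ] GTan V) (iota m) = m := by simp

lemma add_conjT (x : ℂ ⊗[ℝ] GTan V) :
    x + conjT V x = (2 : ℂ) • iota (pre x) := by
  induction x using TensorProduct.induction_on with
  | zero => simp
  | tmul c m =>
      simp only [conjT_tmul, pre_tmul, iota_apply, smul_tmul', smul_eq_mul, mul_one,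
        tmul_smul]
      rw [← add_tmul]
      congr 1
      simp [Complex.ext_iff]
      ring
  | add a b ha hb =>
      simp only [map_add, smul_add]
      rw [show a + b + ((conjT V) a + (conjT V) b)
          = (a + conjT V a) + (b + conjT V b) by abel, ha, hb]

lemma fixed_eq_iota_pre {x : ℂ ⊗[ℝ] GTan V} (h : conjT V x = x) :
    x = iota (pre x) := by
  have h2 := add_conjT x
  rw [h] at h2
  have : (2 : ℂ) • x = (2 : ℂ) • iota (pre x) := by rw [← h2, two_smul]
  have h2ne : (2 : ℂ) ≠ 0 := by norm_num
  calc x = (2 : ℂ)⁻¹ • ((2:ℂ) • x) := by rw [smul_smul, inv_mul_cancel₀ h2ne, one_smul]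
    _ = iota (pre x) := by rw [this, smul_smul, inv_mul_cancel₀ h2ne, one_smul]

lemma conjT_baseChange (f : GTan V →ₗ[ℝ] GTan V) (x : ℂ ⊗[ℝ] GTan V) :
    conjT V (f.baseChange ℂ x) = f.baseChange ℂ (conjT V x) := by
  induction x using TensorProduct.induction_on with
  | zero => simp
  | tmul c m => simp
  | add a b ha hb => simp [map_add, ha, hb]

lemma baseChange_iota (f : GTan V →ₗ[ℝ] GTan V) (m : GTan V) :
    f.baseChange ℂ (iota m) = iota (f m) := by simp

lemma stdPairingC_tmul (a b : ℂ) (m m' : GTan V) :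
    stdPairingC V (a ⊗ₜ[ℝ] m) (b ⊗ₜ[ℝ] m') = (stdPairing V m m') • (a * b) := rfl

lemma stdPairingC_conjT (x y : ℂ ⊗[ℝ] GTan V) :
    stdPairingC V (conjT V x) (conjT V y) = starRingEnd ℂ (stdPairingC V x y) := by
  induction x using TensorProduct.induction_on with
  | zero => simp
  | tmul c m =>
      induction y using TensorProduct.induction_on with
      | zero => simp
      | tmul d m' =>
          simp [stdPairingC_tmul, conjT_tmul, smul_eq_mul, map_mul, Complex.conj_ofReal]
      | add a b ha hb => simp only [map_add, ha, hb]
  | add a b ha hb => simp only [map_add, LinearMap.add_apply, ha, hb]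

lemma stdPairingC_iota (x y : GTan V) :
    stdPairingC V (iota x) (iota y) = (stdPairing V x y : ℂ) := by
  simp [iota_apply, stdPairingC_tmul, smul_eq_mul]

/-- the conjugate subspace σ(E) -/
def Econj (E : Submodule ℂ (ℂ ⊗[ℝ] GTan V)) : Submodule ℂ (ℂ ⊗[ℝ] GTan V) where
  carrier := conjT V '' E
  add_mem' := by
    rintro a b ⟨x, hx, rfl⟩ ⟨y, hy, rfl⟩
    exact ⟨x + y, E.add_mem hx hy, map_add _ _ _⟩
  zero_mem' := ⟨0, E.zero_mem, map_zero _⟩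
  smul_mem' := by
    rintro c a ⟨x, hx, rfl⟩
    refine ⟨(starRingEnd ℂ c) • x, E.smul_mem _ hx, ?_⟩
    rw [conjT_smul]
    simp

lemma mem_Econj {E : Submodule ℂ (ℂ ⊗[ℝ] GTan V)} {x : ℂ ⊗[ℝ] GTan V} :
    x ∈ Econj E ↔ conjT V x ∈ E := by
  constructor
  · rintro ⟨y, hy, rfl⟩
    rwa [conjT_conjT]
  · intro h
    exact ⟨conjT V x, h, conjT_conjT x⟩

lemma conjT_mem_Econj {E : Submodule ℂ (ℂ ⊗[ℝ] GTan V)} {x : ℂ ⊗[ℝ] GTan V}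
    (hx : x ∈ E) : conjT V x ∈ Econj E := ⟨x, hx, rfl⟩

/-- σ restricted, as an `ℝ`-linear equiv between `E` and `σ(E)`. -/
def econjEquiv (E : Submodule ℂ (ℂ ⊗[ℝ] GTan V)) :
    E.restrictScalars ℝ ≃ₗ[ℝ] (Econj E).restrictScalars ℝ :=
  LinearEquiv.ofLinear
    ((conjT V).restrict (p := E.restrictScalars ℝ) (q := (Econj E).restrictScalars ℝ)
      (fun x hx => conjT_mem_Econj hx))
    ((conjT V).restrict (p := (Econj E).restrictScalars ℝ) (q := E.restrictScalars ℝ)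
      (fun x hx => by
        rw [Submodule.restrictScalars_mem] at hx ⊢
        exact mem_Econj.mp hx))
    (by ext x; exact conjT_conjT (x : ℂ ⊗[ℝ] GTan V))
    (by ext x; exact conjT_conjT (x : ℂ ⊗[ℝ] GTan V))

lemma baseChange_eq_of (J : GTan V →ₗ[ℝ] GTan V) (Jc : (ℂ ⊗[ℝ] GTan V) →ₗ[ℂ] (ℂ ⊗[ℝ] GTan V))
    (h : ∀ v, iota (J v) = Jc (iota v)) : J.baseChange ℂ = Jc := by
  apply LinearMap.ext; intro x
  induction x using TensorProduct.induction_on with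
  | zero => simp
  | tmul c m =>
      have hc : c ⊗ₜ[ℝ] m = c • ((1 : ℂ) ⊗ₜ[ℝ] m) := by
        rw [smul_tmul', smul_eq_mul, mul_one]
      rw [hc, map_smul, map_smul]
      have h1 : ((1 : ℂ) ⊗ₜ[ℝ] m) = iota m := rfl
      rw [h1, baseChange_iota, h]
  | add a b ha hb => rw [map_add, map_add, ha, hb]

variable [FiniteDimensional ℝ V]

lemma finrank_Econj (E : Submodule ℂ (ℂ ⊗[ℝ] GTan V)) :
    Module.finrank ℂ (Econj E) = Module.finrank ℂ E := by
  have h1 : Module.finrank ℝ (E.restrictScalars ℝ)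
      = Module.finrank ℝ ((Econj E).restrictScalars ℝ) := (econjEquiv E).finrank_eq
  haveI : Module.Free ℂ E := Module.Free.of_divisionRing ℂ E
  haveI : Module.Free ℂ (Econj E) := Module.Free.of_divisionRing ℂ (Econj E)
  have h2 : Module.finrank ℝ ℂ * Module.finrank ℂ E = Module.finrank ℝ E :=
    Module.finrank_mul_finrank ℝ ℂ E
  have h3 : Module.finrank ℝ ℂ * Module.finrank ℂ (Econj E) = Module.finrank ℝ (Econj E) :=
    Module.finrank_mul_finrank ℝ ℂ (Econj E)
  have h1' : Module.finrank ℝ E = Module.finrank ℝ (Econj E) := h1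
  have : Module.finrank ℝ ℂ * Module.finrank ℂ E
      = Module.finrank ℝ ℂ * Module.finrank ℂ (Econj E) := by
    rw [h2, h3, h1']
  have h2pos : 0 < Module.finrank ℝ ℂ := by
    rw [Complex.finrank_real_complex]; norm_num
  exact (Nat.eq_of_mul_eq_mul_left h2pos this).symm

lemma finrank_W : Module.finrank ℂ (ℂ ⊗[ℝ] GTan V) = 2 * Module.finrank ℝ V := by
  rw [Module.finrank_baseChange, Module.finrank_prod, Subspace.dual_finrank_eq]; ring

end GCAux

open GCAux

set_option maxHeartbeats 1600000

/-- If `E ⊆ 𝕋_ℂ V` is an isotropic complex subspace with `E ∩ σ(E) = 0` and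
`dim_ℂ E = dim_ℝ V`, then there is a unique almost generalized complex structure `J`
on `V` (i.e. `J² = -id`, `J` orthogonal for the standard pairing) whose
complexification has `E` as its `i`-eigenspace. -/
theorem existsUnique_almost_gc_structure_of_maximal_isotropic
    (V : Type*) [AddCommGroup V] [Module ℝ V] [FiniteDimensional ℝ V]
    (E : Submodule ℂ (ℂ ⊗[ℝ] GTan V))
    (hiso : ∀ x ∈ E, ∀ y ∈ E, stdPairingC V x y = 0)
    (hconj : ∀ x ∈ E, conjT V x ∈ E → x = 0)
    (hdim : Module.finrank ℂ E = Module.finrank ℝ V) :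
    ∃! J : GTan V →ₗ[ℝ] GTan V,
      (J ∘ₗ J = -LinearMap.id ∧
        ∀ x y : GTan V, stdPairing V (J x) (J y) = stdPairing V x y) ∧
      iEigenspace J = E := by
  classical
  set E' := Econj E with hE'
  -- disjointness
  have hdisj : Disjoint E E' := by
    rw [Submodule.disjoint_def]
    intro x hxE hxE'
    exact hconj x hxE (mem_Econj.mp hxE')
  -- codisjointness via dimensions
  have htop : E ⊔ E' = ⊤ := by
    apply Submodule.eq_top_of_finrank_eq
    have hsum := Submodule.finrank_sup_add_finrank_inf_eq E E'
    rw [hdisj.eq_bot, finrank_bot, add_zero] at hsum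
    rw [hsum, finrank_Econj, hdim, finrank_W]
    ring
  have hcompl : IsCompl E E' := ⟨hdisj, codisjoint_iff.mpr htop⟩
  -- decomposition
  have hdec : ∀ x : ℂ ⊗[ℝ] GTan V, ∃ a ∈ E, ∃ b ∈ E', x = a + b := by
    intro x
    have : x ∈ E ⊔ E' := htop ▸ Submodule.mem_top
    obtain ⟨a, ha, b, hb, hab⟩ := Submodule.mem_sup.mp this
    exact ⟨a, ha, b, hb, hab.symm⟩
  -- the complexified J
  set pE : (ℂ ⊗[ℝ] GTan V) →ₗ[ℂ] E := E.linearProjOfIsCompl E' hcompl with hpE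
  set pE' : (ℂ ⊗[ℝ] GTan V) →ₗ[ℂ] E' := E'.linearProjOfIsCompl E hcompl.symm with hpE'
  set Jc : (ℂ ⊗[ℝ] GTan V) →ₗ[ℂ] (ℂ ⊗[ℝ] GTan V) :=
    Complex.I • (E.subtype ∘ₗ pE - E'.subtype ∘ₗ pE') with hJcdef
  have hJcE : ∀ x ∈ E, Jc x = Complex.I • x := by
    intro x hx
    have h1 : pE x = ⟨x, hx⟩ := Submodule.linearProjOfIsCompl_apply_left hcompl ⟨x, hx⟩
    have h2 : pE' x = 0 := Submodule.linearProjOfIsCompl_apply_right' hcompl.symm hx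
    simp [hJcdef, h1, h2]
  have hJcE' : ∀ x ∈ E', Jc x = -(Complex.I • x) := by
    intro x hx
    have h1 : pE x = 0 := Submodule.linearProjOfIsCompl_apply_right' hcompl hx
    have h2 : pE' x = ⟨x, hx⟩ := Submodule.linearProjOfIsCompl_apply_left hcompl.symm ⟨x, hx⟩
    simp [hJcdef, h1, h2]
  have hJcadd : ∀ a ∈ E, ∀ b ∈ E', Jc (a + b) = Complex.I • a - Complex.I • b := by
    intro a ha b hb
    rw [map_add, hJcE a ha, hJcE' b hb, sub_eq_add_neg]
  have hJcJc : ∀ x, Jc (Jc x) = -x := by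
    intro x
    obtain ⟨a, ha, b, hb, rfl⟩ := hdec x
    rw [hJcadd a ha b hb, map_sub, map_smul, map_smul, hJcE a ha, hJcE' b hb,
      smul_neg, smul_smul, smul_smul, Complex.I_mul_I]
    module
  -- σ-related facts
  have hσE : ∀ a ∈ E, conjT V a ∈ E' := fun a ha => conjT_mem_Econj ha
  have hσE' : ∀ b ∈ E', conjT V b ∈ E := fun b hb => mem_Econj.mp hb
  have hJcσ : ∀ x, conjT V (Jc x) = Jc (conjT V x) := by
    intro x
    obtain ⟨a, ha, b, hb, rfl⟩ := hdec x
    have key := hJcadd (conjT V b) (hσE' b hb) (conjT V a) (hσE a ha)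
    calc conjT V (Jc (a + b)) = conjT V (Complex.I • a - Complex.I • b) := by
          rw [hJcadd a ha b hb]
      _ = Complex.I • conjT V b - Complex.I • conjT V a := by
          rw [map_sub, conjT_smul, conjT_smul, Complex.conj_I]
          module
      _ = Jc (conjT V (a + b)) := by rw [map_add (conjT V), add_comm, key]
  -- the real structure map J
  set J : GTan V →ₗ[ℝ] GTan V :=
    GCAux.pre ∘ₗ (Jc.restrictScalars ℝ) ∘ₗ GCAux.iota with hJdef
  have hσι : ∀ v : GTan V, conjT V (GCAux.iota v) = GCAux.iota v := by
    intro v; simp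
  have hιJ : ∀ v : GTan V, GCAux.iota (J v) = Jc (GCAux.iota v) := by
    intro v
    have hfix : conjT V (Jc (GCAux.iota v)) = Jc (GCAux.iota v) := by
      rw [hJcσ, hσι]
    have h := fixed_eq_iota_pre hfix
    have hJv : J v = GCAux.pre (Jc (GCAux.iota v)) := rfl
    rw [hJv, ← h]
  have hJJ : J ∘ₗ J = -LinearMap.id := by
    apply LinearMap.ext; intro v
    have h1 : GCAux.iota ((J ∘ₗ J) v) = GCAux.iota ((-LinearMap.id : GTan V →ₗ[ℝ] GTan V) v) := by
      simp only [LinearMap.comp_apply, LinearMap.neg_apply, LinearMap.id_apply, map_neg]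
      rw [hιJ, hιJ, hJcJc]
    have h2 := congrArg GCAux.pre h1
    rwa [pre_iota, pre_iota] at h2
  clear hpE hpE' hJcdef hJdef
  clear_value pE pE' Jc J
  -- base change of J is Jc
  have hbc : J.baseChange ℂ = Jc := baseChange_eq_of J Jc hιJ
  -- eigenspace
  have heig : iEigenspace J = E := by
    unfold iEigenspace
    rw [hbc]
    ext x
    rw [LinearMap.mem_ker, LinearMap.sub_apply, LinearMap.smul_apply,
      LinearMap.id_apply, sub_eq_zero]
    constructor
    · intro hx
      obtain ⟨a, ha, b, hb, rfl⟩ := hdec x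
      rw [hJcadd a ha b hb, smul_add] at hx
      have hb0 : ((2 : ℂ) * Complex.I) • b = 0 := by
        have h2 : Complex.I • b + Complex.I • b = 0 := by
          have := sub_eq_iff_eq_add.mp hx
          -- I•a = I•a + I•b + I•b
          have h3 : Complex.I • a + 0 = Complex.I • a + (Complex.I • b + Complex.I • b) := by
            rw [add_zero]
            calc Complex.I • a = Complex.I • a - Complex.I • b + Complex.I • b := by abel
              _ = Complex.I • a + Complex.I • b + Complex.I • b := by rw [hx]
              _ = Complex.I • a + (Complex.I • b + Complex.I • b) := by abel
          exact (add_left_cancel h3).symm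
        rw [mul_smul, two_smul]
        exact h2
      have hb0' : b = 0 := by
        have hne : (2 : ℂ) * Complex.I ≠ 0 := by
          simp [Complex.I_ne_zero]
        exact (smul_eq_zero.mp hb0).resolve_left hne
      rw [hb0', add_zero]
      exact ha
    · intro hx
      rw [hJcE x hx]
  -- isotropy of E'
  have hisoE' : ∀ x ∈ E', ∀ y ∈ E', stdPairingC V x y = 0 := by
    rintro x ⟨a, ha, rfl⟩ y ⟨b, hb, rfl⟩
    rw [stdPairingC_conjT, hiso a ha b hb, map_zero]
  -- orthogonality of Jc for the pairing
  have hBJc : ∀ x y, stdPairingC V (Jc x) (Jc y) = stdPairingC V x y := by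
    intro x y
    obtain ⟨a, ha, b, hb, rfl⟩ := hdec x
    obtain ⟨a', ha', b', hb', rfl⟩ := hdec y
    rw [hJcadd a ha b hb, hJcadd a' ha' b' hb']
    have h1 := hiso a ha a' ha'
    have h2 := hisoE' b hb b' hb'
    simp only [map_add, map_sub, map_smul, LinearMap.add_apply, LinearMap.sub_apply,
      LinearMap.smul_apply, smul_eq_mul, h1, h2, mul_zero, smul_zero]
    ring_nf
    rw [Complex.I_sq]
    ring
  -- orthogonality of J
  have horth : ∀ x y : GTan V, stdPairing V (J x) (J y) = stdPairing V x y := by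
    intro x y
    have h := hBJc (GCAux.iota x) (GCAux.iota y)
    rw [← hιJ, ← hιJ, stdPairingC_iota, stdPairingC_iota] at h
    exact_mod_cast h
  refine ⟨J, ⟨⟨hJJ, horth⟩, heig⟩, ?_⟩
  -- uniqueness
  rintro J' ⟨⟨hJ'sq, hJ'orth⟩, heig'⟩
  have hJ'E : ∀ x ∈ E, J'.baseChange ℂ x = Complex.I • x := by
    intro x hx
    rw [← heig'] at hx
    have := LinearMap.mem_ker.mp hx
    rw [LinearMap.sub_apply, LinearMap.smul_apply, LinearMap.id_apply, sub_eq_zero] at this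
    exact this
  have hJ'E' : ∀ x ∈ E', J'.baseChange ℂ x = -(Complex.I • x) := by
    rintro x ⟨y, hy, rfl⟩
    rw [← conjT_baseChange, hJ'E y hy, conjT_smul, Complex.conj_I]
    module
  have hJ'c : ∀ x, J'.baseChange ℂ x = Jc x := by
    intro x
    obtain ⟨a, ha, b, hb, rfl⟩ := hdec x
    rw [map_add, map_add, hJ'E a ha, hJ'E' b hb, hJcE a ha, hJcE' b hb]
  apply LinearMap.ext; intro v
  have h1 : GCAux.iota (J' v) = GCAux.iota (J v) := by
    rw [hιJ, ← baseChange_iota J' v, hJ'c]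
  have h2 := congrArg GCAux.pre h1
  rwa [pre_iota, pre_iota] at h2
end
end

section
/- Let V be a finite-dimensional real vector space, U ⊆ V a linear subspace with inclusion ι : U → V, and E ⊆ 𝕋_ℂ V a maximal isotropic complex subspace. Define E_U := { (X, λ ∘ ι_ℂ) : X ∈ ℂ ⊗_ℝ U, λ ∈ ℂ ⊗_ℝ V*, and (X, λ) ∈ E } ⊆ 𝕋_ℂ U, where ι_ℂ : ℂ ⊗_ℝ U → ℂ ⊗_ℝ V is the complexified inclusion and λ ∘ ι_ℂ is the restriction of λ to ℂ ⊗_ℝ U. Then E_U is a maximal isotropic complex subspace of 𝕋_ℂ U, i.e. it is isotropic for the ℂ-bilinear extension of the standard pairing on 𝕋U and dim_ℂ E_U = dim_ℝ U. -/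
open TensorProduct

noncomputable section

/-- The projection `𝕋_ℂ V → ℂ ⊗ V` onto the first summand. -/
def projTanC (V : Type*) [AddCommGroup V] [Module ℝ V] :
    ℂ ⊗[ℝ] GTan V →ₗ[ℂ] ℂ ⊗[ℝ] V :=
  (LinearMap.fst ℝ V (V →ₗ[ℝ] ℝ)).baseChange ℂ

/-- The projection `𝕋_ℂ V → ℂ ⊗ V*` onto the second summand. -/
def projCotC (V : Type*) [AddCommGroup V] [Module ℝ V] :
    ℂ ⊗[ℝ] GTan V →ₗ[ℂ] ℂ ⊗[ℝ] (V →ₗ[ℝ] ℝ) :=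
  (LinearMap.snd ℝ V (V →ₗ[ℝ] ℝ)).baseChange ℂ

namespace RestrictionAux
open LinearMap Module

variable {M N : Type*} [AddCommGroup M] [Module ℝ M] [AddCommGroup N] [Module ℝ N]

def gfun (l : M →ₗ[ℝ] ℝ) : ℂ ⊗[ℝ] M →ₗ[ℂ] ℂ :=
  ((Algebra.linearMap ℝ ℂ).comp l).liftBaseChange ℂ

@[simp] lemma gfun_tmul (l : M →ₗ[ℝ] ℝ) (c : ℂ) (m : M) :
    gfun l (c ⊗ₜ m) = c * (l m : ℂ) := by
  simp [gfun, LinearMap.liftBaseChange_tmul, smul_eq_mul, Algebra.linearMap_apply,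
    Complex.coe_algebraMap]

lemma eq_zero_of_gfun {ι : Type*} [Fintype ι] [DecidableEq ι] (c : Basis ι ℝ M)
    (l : ι → (M →ₗ[ℝ] ℝ)) (hl : ∀ i j, l j (c i) = if i = j then 1 else 0)
    {a : ℂ ⊗[ℝ] M} (h : ∀ j, gfun (l j) a = 0) : a = 0 := by
  let B := c.baseChange ℂ
  refine B.ext_elem fun j => ?_
  have h2 := h j
  conv_lhs at h2 => rw [← B.sum_repr a]
  rw [map_sum] at h2
  simp only [map_smul, Basis.baseChange_apply, gfun_tmul, hl, B] at h2
  simp only [one_mul, apply_ite, Complex.ofReal_one, Complex.ofReal_zero, smul_eq_mul,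
    mul_ite, mul_one, mul_zero, Finset.sum_ite_eq', Finset.mem_univ, if_true] at h2
  simp [h2, B]

lemma gfun_sep [FiniteDimensional ℝ M] {a : ℂ ⊗[ℝ] M}
    (h : ∀ l : M →ₗ[ℝ] ℝ, gfun l a = 0) : a = 0 := by
  classical
  let c := Module.finBasis ℝ M
  exact eq_zero_of_gfun c (fun j => c.coord j)
    (fun i j => by simp [Basis.coord_apply, Basis.repr_self, Finsupp.single_apply])
    (fun j => h _)

def efun (m : M) : ℂ ⊗[ℝ] (M →ₗ[ℝ] ℝ) →ₗ[ℂ] ℂ := gfun (Module.Dual.eval ℝ M m)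

@[simp] lemma efun_tmul (m : M) (c : ℂ) (l : M →ₗ[ℝ] ℝ) :
    efun m (c ⊗ₜ l) = c * (l m : ℂ) := gfun_tmul _ _ _

lemma efun_sep [FiniteDimensional ℝ M] {b : ℂ ⊗[ℝ] (M →ₗ[ℝ] ℝ)}
    (h : ∀ m : M, efun m b = 0) : b = 0 := by
  classical
  let c := Module.finBasis ℝ M
  refine eq_zero_of_gfun c.dualBasis (fun j => Module.Dual.eval ℝ M (c j))
    (fun i j => ?_) (fun j => h _)
  simp [Basis.dualBasis_apply_self, Finsupp.single_apply, eq_comm]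

lemma efun_dualMap {U' : Type*} [AddCommGroup U'] [Module ℝ U'] (ι : U' →ₗ[ℝ] M) (u : U')
    (b : ℂ ⊗[ℝ] (M →ₗ[ℝ] ℝ)) :
    efun (ι u) b = efun u (ι.dualMap.baseChange ℂ b) := by
  induction b using TensorProduct.induction_on with
  | zero => simp
  | tmul c l => simp [LinearMap.baseChange_tmul]
  | add x y hx hy => simp [map_add, hx, hy]

lemma tensor_prod_decomp (z : ℂ ⊗[ℝ] (M × N)) :
    ((LinearMap.inl ℝ M N).baseChange ℂ) (((LinearMap.fst ℝ M N).baseChange ℂ) z)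
      + ((LinearMap.inr ℝ M N).baseChange ℂ) (((LinearMap.snd ℝ M N).baseChange ℂ) z) = z := by
  induction z using TensorProduct.induction_on with
  | zero => simp
  | tmul c x =>
      simp only [LinearMap.baseChange_tmul, LinearMap.fst_apply, LinearMap.snd_apply,
        LinearMap.inl_apply, LinearMap.inr_apply, ← TensorProduct.tmul_add]
      simp
  | add x y hx hy =>
      simp only [map_add]
      rw [add_add_add_comm, hx, hy]

lemma tensor_prod_eq {x y : ℂ ⊗[ℝ] (M × N)}
    (h1 : ((LinearMap.fst ℝ M N).baseChange ℂ) x = ((LinearMap.fst ℝ M N).baseChange ℂ) y)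
    (h2 : ((LinearMap.snd ℝ M N).baseChange ℂ) x = ((LinearMap.snd ℝ M N).baseChange ℂ) y) :
    x = y := by
  rw [← tensor_prod_decomp x, ← tensor_prod_decomp y, h1, h2]

end RestrictionAux
section MoreAux
namespace RestrictionAux
open LinearMap Module

variable {M N M₂ N₂ : Type*} [AddCommGroup M] [Module ℝ M] [AddCommGroup N] [Module ℝ N]
  [AddCommGroup M₂] [Module ℝ M₂] [AddCommGroup N₂] [Module ℝ N₂]

lemma fst_baseChange_prodMap (f : M →ₗ[ℝ] M₂) (g : N →ₗ[ℝ] N₂) (z : ℂ ⊗[ℝ] (M × N)) :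
    ((LinearMap.fst ℝ M₂ N₂).baseChange ℂ) ((f.prodMap g).baseChange ℂ z)
      = f.baseChange ℂ (((LinearMap.fst ℝ M N).baseChange ℂ) z) := by
  induction z using TensorProduct.induction_on with
  | zero => simp
  | tmul c x => simp [LinearMap.baseChange_tmul]
  | add x y hx hy => simp [map_add, hx, hy]

lemma snd_baseChange_prodMap (f : M →ₗ[ℝ] M₂) (g : N →ₗ[ℝ] N₂) (z : ℂ ⊗[ℝ] (M × N)) :
    ((LinearMap.snd ℝ M₂ N₂).baseChange ℂ) ((f.prodMap g).baseChange ℂ z)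
      = g.baseChange ℂ (((LinearMap.snd ℝ M N).baseChange ℂ) z) := by
  induction z using TensorProduct.induction_on with
  | zero => simp
  | tmul c x => simp [LinearMap.baseChange_tmul]
  | add x y hx hy => simp [map_add, hx, hy]

end RestrictionAux
end MoreAux
section PairLemmas
open LinearMap Module RestrictionAux

variable (V : Type*) [AddCommGroup V] [Module ℝ V]

lemma pair_inl (u : V) (z : ℂ ⊗[ℝ] GTan V) :
    stdPairingC V ((1:ℂ) ⊗ₜ ((u, 0) : GTan V)) z = (2⁻¹ : ℂ) * efun u (projCotC V z) := by
  induction z using TensorProduct.induction_on with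
  | zero => simp
  | tmul c x =>
      obtain ⟨v, l⟩ := x
      simp only [stdPairingC, LinearMap.BilinForm.baseChange_tmul, stdPairing,
        LinearMap.mk₂_apply, projCotC, LinearMap.baseChange_tmul, LinearMap.snd_apply,
        efun_tmul, LinearMap.zero_apply, zero_add, Complex.real_smul, one_mul]
      push_cast
      ring
  | add x y hx hy => simp only [map_add, hx, hy, mul_add]

lemma pair_inr (μ : V →ₗ[ℝ] ℝ) (z : ℂ ⊗[ℝ] GTan V) :
    stdPairingC V ((1:ℂ) ⊗ₜ (((0 : V), μ) : GTan V)) z = (2⁻¹ : ℂ) * gfun μ (projTanC V z) := by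
  induction z using TensorProduct.induction_on with
  | zero => simp
  | tmul c x =>
      obtain ⟨v, l⟩ := x
      simp only [stdPairingC, LinearMap.BilinForm.baseChange_tmul, stdPairing,
        LinearMap.mk₂_apply, projTanC, LinearMap.baseChange_tmul, LinearMap.fst_apply,
        gfun_tmul, map_zero, add_zero, Complex.real_smul, one_mul]
      push_cast
      ring
  | add x y hx hy => simp only [map_add, hx, hy, mul_add]

variable {U' : Type*} [AddCommGroup U'] [Module ℝ U']

lemma pair_transfer (p : V →ₗ[ℝ] U') (ι : U' →ₗ[ℝ] V) (a b : ℂ ⊗[ℝ] GTan V) :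
    stdPairingC U' ((p.prodMap ι.dualMap).baseChange ℂ a) ((p.prodMap ι.dualMap).baseChange ℂ b)
      = stdPairingC V (((ι.comp p).prodMap LinearMap.id).baseChange ℂ a)
          (((ι.comp p).prodMap LinearMap.id).baseChange ℂ b) := by
  induction a using TensorProduct.induction_on with
  | zero => simp
  | tmul c x =>
      induction b using TensorProduct.induction_on with
      | zero => simp
      | tmul d y =>
          obtain ⟨v, l⟩ := x
          obtain ⟨w, m⟩ := y
          simp only [LinearMap.baseChange_tmul, LinearMap.prodMap_apply, stdPairingC,
            LinearMap.BilinForm.baseChange_tmul, stdPairing, LinearMap.mk₂_apply]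
          rfl
      | add y₁ y₂ h₁ h₂ => simp only [map_add, h₁, h₂]
  | add x₁ x₂ h₁ h₂ =>
      simp only [map_add, LinearMap.add_apply, h₁, h₂]

end PairLemmas
section AbstractRankNullity
namespace RestrictionAux

lemma finrank_map_add_finrank_inf_ker {K M N : Type*} [DivisionRing K] [AddCommGroup M]
    [Module K M] [AddCommGroup N] [Module K N] [FiniteDimensional K M]
    (f : M →ₗ[K] N) (G : Submodule K M) :
    Module.finrank K ↥(Submodule.map f G) + Module.finrank K ↥(LinearMap.ker f ⊓ G)
      = Module.finrank K ↥G := by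
  have h := LinearMap.finrank_range_add_finrank_ker (f.domRestrict G)
  rw [LinearMap.range_domRestrict] at h
  have hker : Module.finrank K ↥(LinearMap.ker (f.domRestrict G))
      = Module.finrank K ↥(LinearMap.ker f ⊓ G) := by
    rw [LinearMap.ker_domRestrict]
    have he : Submodule.comap G.subtype (LinearMap.ker f)
        = Submodule.comap G.subtype (LinearMap.ker f ⊓ G) := by
      ext x
      simp only [Submodule.mem_comap, Submodule.mem_inf]
      exact ⟨fun hx => ⟨hx, x.2⟩, fun hx => hx.1⟩
    rw [he]
    exact LinearEquiv.finrank_eq (Submodule.comapSubtypeEquivOfLe inf_le_right)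
  rw [hker] at h
  exact h

end RestrictionAux
end AbstractRankNullity

set_option maxHeartbeats 1000000 in
set_option synthInstance.maxHeartbeats 200000 in
open LinearMap Module RestrictionAux in
/-- Restriction of a maximal isotropic `E ⊆ 𝕋_ℂ V` to a subspace `U ⊆ V`:
`E_U = {(X, λ∘ι_ℂ) : X ∈ ℂ ⊗ U, λ ∈ ℂ ⊗ V*, (ι_ℂ X, λ) ∈ E}` is a maximal isotropic
complex subspace of `𝕋_ℂ U`. Here an element `w ∈ 𝕋_ℂ U` is described by its two
components `projTanC U w` and `projCotC U w`, `ι_ℂ` is the complexified inclusion, and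
`λ ∘ ι_ℂ` is the complexified restriction of functionals. -/
theorem restriction_of_maximal_isotropic_is_maximal_isotropic
    (V : Type*) [AddCommGroup V] [Module ℝ V] [FiniteDimensional ℝ V]
    (U : Submodule ℝ V)
    (E : Submodule ℂ (ℂ ⊗[ℝ] GTan V))
    (hiso : ∀ x ∈ E, ∀ y ∈ E, stdPairingC V x y = 0)
    (hdim : Module.finrank ℂ E = Module.finrank ℝ V) :
    ∃ F : Submodule ℂ (ℂ ⊗[ℝ] GTan ↥U),
      (F : Set (ℂ ⊗[ℝ] GTan ↥U)) =
        {w : ℂ ⊗[ℝ] GTan ↥U | ∃ z ∈ E,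
          projTanC V z = (U.subtype.baseChange ℂ) (projTanC ↥U w) ∧
          projCotC ↥U w = (U.subtype.dualMap.baseChange ℂ) (projCotC V z)} ∧
      (∀ x ∈ F, ∀ y ∈ F, stdPairingC ↥U x y = 0) ∧
      Module.finrank ℂ F = Module.finrank ℝ ↥U := by
  classical
  obtain ⟨p, hp⟩ := U.subtype.exists_leftInverse_of_injective U.ker_subtype
  -- abbreviation-free identities
  have hpιC : ∀ a : ℂ ⊗[ℝ] ↥U, p.baseChange ℂ (U.subtype.baseChange ℂ a) = a := by
    intro a
    have h : (p.baseChange ℂ).comp (U.subtype.baseChange ℂ) = LinearMap.id := by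
      rw [← LinearMap.baseChange_comp, hp, LinearMap.baseChange_id]
    calc p.baseChange ℂ (U.subtype.baseChange ℂ a)
        = ((p.baseChange ℂ).comp (U.subtype.baseChange ℂ)) a := rfl
      _ = a := by rw [h]; rfl
  -- the restriction map and the subspace of restrictable elements
  set Φ : ℂ ⊗[ℝ] GTan V →ₗ[ℂ] ℂ ⊗[ℝ] GTan ↥U :=
    (p.prodMap U.subtype.dualMap).baseChange ℂ with hΦdef
  set W : Submodule ℂ (ℂ ⊗[ℝ] GTan V) :=
    Submodule.comap (projTanC V) (LinearMap.range (U.subtype.baseChange ℂ)) with hWdef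
  have hmemW : ∀ z : ℂ ⊗[ℝ] GTan V,
      z ∈ W ↔ projTanC V z ∈ LinearMap.range (U.subtype.baseChange ℂ) := fun z => Iff.rfl
  have hΦ1 : ∀ z, projTanC ↥U (Φ z) = p.baseChange ℂ (projTanC V z) := fun z =>
    fst_baseChange_prodMap p U.subtype.dualMap z
  have hΦ2 : ∀ z, projCotC ↥U (Φ z) = U.subtype.dualMap.baseChange ℂ (projCotC V z) := fun z =>
    snd_baseChange_prodMap p U.subtype.dualMap z
  have heqU : ∀ x y : ℂ ⊗[ℝ] GTan ↥U,
      projTanC ↥U x = projTanC ↥U y → projCotC ↥U x = projCotC ↥U y → x = y :=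
    fun x y h1 h2 => tensor_prod_eq h1 h2
  have heqV : ∀ x y : ℂ ⊗[ℝ] GTan V,
      projTanC V x = projTanC V y → projCotC V x = projCotC V y → x = y :=
    fun x y h1 h2 => tensor_prod_eq h1 h2
  have hdecV : ∀ z : ℂ ⊗[ℝ] GTan V,
      (LinearMap.inl ℝ V (V →ₗ[ℝ] ℝ)).baseChange ℂ (projTanC V z)
        + (LinearMap.inr ℝ V (V →ₗ[ℝ] ℝ)).baseChange ℂ (projCotC V z) = z :=
    fun z => tensor_prod_decomp z
  -- the fixed-point property of Ψ on W
  have hΨfix : ∀ z ∈ W,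
      ((U.subtype.comp p).prodMap (LinearMap.id : (V →ₗ[ℝ] ℝ) →ₗ[ℝ] (V →ₗ[ℝ] ℝ))).baseChange ℂ z
        = z := by
    intro z hz
    obtain ⟨α, hα⟩ := (hmemW z).mp hz
    refine heqV _ _ ?_ ?_
    · have h1 := fst_baseChange_prodMap (U.subtype.comp p)
        (LinearMap.id : (V →ₗ[ℝ] ℝ) →ₗ[ℝ] (V →ₗ[ℝ] ℝ)) z
      have h2 : (U.subtype.comp p).baseChange ℂ (projTanC V z)
          = U.subtype.baseChange ℂ (p.baseChange ℂ (projTanC V z)) := by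
        rw [LinearMap.baseChange_comp]; rfl
      rw [show projTanC V (((U.subtype.comp p).prodMap
          (LinearMap.id : (V →ₗ[ℝ] ℝ) →ₗ[ℝ] (V →ₗ[ℝ] ℝ))).baseChange ℂ z)
          = (U.subtype.comp p).baseChange ℂ (projTanC V z) from h1, h2, ← hα, hpιC]
    · have h1 := snd_baseChange_prodMap (U.subtype.comp p)
        (LinearMap.id : (V →ₗ[ℝ] ℝ) →ₗ[ℝ] (V →ₗ[ℝ] ℝ)) z
      rw [show projCotC V (((U.subtype.comp p).prodMap
          (LinearMap.id : (V →ₗ[ℝ] ℝ) →ₗ[ℝ] (V →ₗ[ℝ] ℝ))).baseChange ℂ z)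
          = (LinearMap.id : (V →ₗ[ℝ] ℝ) →ₗ[ℝ] (V →ₗ[ℝ] ℝ)).baseChange ℂ (projCotC V z) from h1,
        LinearMap.baseChange_id]
      rfl
  -- symmetry and reflexivity
  have hBsymmR : (stdPairing V).IsSymm := by
    refine ⟨fun x y => ?_⟩
    simp only [stdPairing, LinearMap.mk₂_apply, RingHom.id_apply]
    ring
  have hBsymm : (stdPairingC V).IsSymm := LinearMap.BilinForm.isSymm_iff.mpr
    (LinearMap.BilinForm.IsSymm.baseChange ℂ (LinearMap.BilinForm.isSymm_iff.mp hBsymmR))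
  have hBrefl : (stdPairingC V).IsRefl := hBsymm.isRefl
  -- nondegeneracy
  have htwo : (2⁻¹ : ℂ) ≠ 0 := by norm_num
  have hBnd : (stdPairingC V).Nondegenerate := by
    refine (LinearMap.IsRefl.nondegenerate_iff_separatingLeft hBrefl).mpr ?_
    intro m hm
    have h1 : projTanC V m = 0 := by
      refine gfun_sep fun μ => ?_
      have h := hm ((1:ℂ) ⊗ₜ (((0 : V), μ) : GTan V))
      rw [← hBsymm.eq ((1:ℂ) ⊗ₜ (((0 : V), μ) : GTan V)) m] at h
      rw [pair_inr] at h
      exact (mul_eq_zero.mp h).resolve_left htwo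
    have h2 : projCotC V m = 0 := by
      refine efun_sep fun u => ?_
      have h := hm ((1:ℂ) ⊗ₜ ((u, 0) : GTan V))
      rw [← hBsymm.eq ((1:ℂ) ⊗ₜ ((u, 0) : GTan V)) m] at h
      rw [pair_inl] at h
      exact (mul_eq_zero.mp h).resolve_left htwo
    rw [← hdecV m, h1, h2, map_zero, map_zero, add_zero]
  -- description of the orthogonal complement of W
  set K : Submodule ℂ (ℂ ⊗[ℝ] GTan V) :=
    LinearMap.ker (projTanC V) ⊓
      Submodule.comap (projCotC V) (LinearMap.ker (U.subtype.dualMap.baseChange ℂ)) with hKdef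
  have hmemK : ∀ z : ℂ ⊗[ℝ] GTan V, z ∈ K ↔
      projTanC V z = 0 ∧ U.subtype.dualMap.baseChange ℂ (projCotC V z) = 0 :=
    fun _ => Iff.rfl
  have horthW : (stdPairingC V).orthogonal W = K := by
    ext z
    rw [LinearMap.BilinForm.mem_orthogonal_iff, hmemK]
    constructor
    · intro hz
      constructor
      · refine gfun_sep fun μ => ?_
        have hmem : ((1:ℂ) ⊗ₜ (((0 : V), μ) : GTan V)) ∈ W := by
          rw [hmemW]
          show (LinearMap.fst ℝ V (V →ₗ[ℝ] ℝ)).baseChange ℂ ((1:ℂ) ⊗ₜ (((0 : V), μ) : GTan V))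
            ∈ _
          rw [LinearMap.baseChange_tmul]
          simp
        have h := hz _ hmem
        rw [pair_inr] at h
        exact (mul_eq_zero.mp h).resolve_left htwo
      · refine efun_sep fun u => ?_
        have hmem : ((1:ℂ) ⊗ₜ ((U.subtype u, 0) : GTan V)) ∈ W := by
          rw [hmemW]
          show (LinearMap.fst ℝ V (V →ₗ[ℝ] ℝ)).baseChange ℂ
            ((1:ℂ) ⊗ₜ ((U.subtype u, 0) : GTan V)) ∈ _
          rw [LinearMap.baseChange_tmul]
          exact ⟨(1:ℂ) ⊗ₜ u, by rw [LinearMap.baseChange_tmul]; rfl⟩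
        have h := hz _ hmem
        rw [pair_inl] at h
        rw [← efun_dualMap]
        exact (mul_eq_zero.mp h).resolve_left htwo
    · rintro ⟨h1, h2⟩ nn hnn
      obtain ⟨α, hα⟩ := (hmemW nn).mp hnn
      rw [← hdecV nn, map_add, LinearMap.add_apply]
      have hterm2 : ∀ b : ℂ ⊗[ℝ] (V →ₗ[ℝ] ℝ),
          stdPairingC V ((LinearMap.inr ℝ V (V →ₗ[ℝ] ℝ)).baseChange ℂ b) z = 0 := by
        intro b
        induction b using TensorProduct.induction_on with
        | zero => simp
        | tmul c μ =>
            rw [LinearMap.baseChange_tmul]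
            have : (c ⊗ₜ (LinearMap.inr ℝ V (V →ₗ[ℝ] ℝ) μ) : ℂ ⊗[ℝ] GTan V)
                = c • ((1:ℂ) ⊗ₜ (((0:V), μ) : GTan V)) := by
              rw [TensorProduct.smul_tmul']
              simp
            rw [this, map_smul, LinearMap.smul_apply, pair_inr, h1, map_zero, mul_zero,
              smul_zero]
        | add x y hx hy => rw [map_add, map_add, LinearMap.add_apply, hx, hy, add_zero]
      have hterm1 : ∀ β : ℂ ⊗[ℝ] ↥U,
          stdPairingC V ((LinearMap.inl ℝ V (V →ₗ[ℝ] ℝ)).baseChange ℂ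
            (U.subtype.baseChange ℂ β)) z = 0 := by
        intro β
        induction β using TensorProduct.induction_on with
        | zero => simp
        | tmul c u =>
            rw [LinearMap.baseChange_tmul, LinearMap.baseChange_tmul]
            have : (c ⊗ₜ (LinearMap.inl ℝ V (V →ₗ[ℝ] ℝ) (U.subtype u)) : ℂ ⊗[ℝ] GTan V)
                = c • ((1:ℂ) ⊗ₜ ((U.subtype u, 0) : GTan V)) := by
              rw [TensorProduct.smul_tmul']
              simp
            rw [this, map_smul, LinearMap.smul_apply, pair_inl, efun_dualMap U.subtype, h2,
              map_zero, mul_zero, smul_zero]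
        | add x y hx hy => rw [map_add, map_add, map_add, LinearMap.add_apply, hx, hy, add_zero]
      rw [← hα, hterm1 α, hterm2, add_zero]
  -- E is its own orthogonal complement
  have htotal : Module.finrank ℂ (ℂ ⊗[ℝ] GTan V) = 2 * Module.finrank ℝ V := by
    rw [Module.finrank_baseChange, Module.finrank_prod, Subspace.dual_finrank_eq]; ring
  have horthtop : (stdPairingC V).orthogonal ⊤ = ⊥ :=
    LinearMap.BilinForm.orthogonal_top_eq_bot hBnd
  have hrankE : Module.finrank ℂ (E) + Module.finrank ℂ ((stdPairingC V).orthogonal E)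
      = 2 * Module.finrank ℝ V := by
    have h := LinearMap.BilinForm.finrank_add_finrank_orthogonal hBrefl E
    rw [horthtop, inf_bot_eq, finrank_bot, add_zero, htotal] at h
    exact h
  have hEorth : (stdPairingC V).orthogonal E = E := by
    have hle : E ≤ (stdPairingC V).orthogonal E := fun z hz n hn => hiso n hn z hz
    refine (Submodule.eq_of_le_of_finrank_le hle ?_).symm
    omega
  -- the orthogonal of E ⊔ W
  have horthsup0 : (stdPairingC V).orthogonal (E ⊔ W)
      = (stdPairingC V).orthogonal E ⊓ (stdPairingC V).orthogonal W := by
    ext z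
    simp only [LinearMap.BilinForm.mem_orthogonal_iff, Submodule.mem_inf]
    constructor
    · intro hz
      exact ⟨fun n hn => hz n (Submodule.mem_sup_left hn),
        fun n hn => hz n (Submodule.mem_sup_right hn)⟩
    · rintro ⟨hz1, hz2⟩ n hn
      obtain ⟨a, ha, b, hb, rfl⟩ := Submodule.mem_sup.mp hn
      rw [map_add, LinearMap.add_apply]
      rw [show stdPairingC V a z = 0 from hz1 a ha, show stdPairingC V b z = 0 from hz2 b hb,
        add_zero]
  have horthsup : (stdPairingC V).orthogonal (E ⊔ W) = E ⊓ K := by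
    rw [horthsup0, hEorth, horthW]
  -- dimension of W
  have hsurjTan : Function.Surjective (projTanC V) := by
    intro a
    refine ⟨(LinearMap.inl ℝ V (V →ₗ[ℝ] ℝ)).baseChange ℂ a, ?_⟩
    have h : (projTanC V).comp ((LinearMap.inl ℝ V (V →ₗ[ℝ] ℝ)).baseChange ℂ)
        = LinearMap.id := by
      show ((LinearMap.fst ℝ V (V →ₗ[ℝ] ℝ)).baseChange ℂ).comp _ = _
      rw [← LinearMap.baseChange_comp, LinearMap.fst_comp_inl, LinearMap.baseChange_id]
    calc projTanC V ((LinearMap.inl ℝ V (V →ₗ[ℝ] ℝ)).baseChange ℂ a)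
        = ((projTanC V).comp ((LinearMap.inl ℝ V (V →ₗ[ℝ] ℝ)).baseChange ℂ)) a := rfl
      _ = a := by rw [h]; rfl
  have hinjι : Function.Injective (U.subtype.baseChange ℂ) :=
    Function.LeftInverse.injective hpιC
  have hrankTU : Module.finrank ℂ (LinearMap.range (U.subtype.baseChange ℂ))
      = Module.finrank ℝ ↥U := by
    rw [LinearMap.finrank_range_of_inj hinjι, Module.finrank_baseChange]
  have hrankkerTan : Module.finrank ℂ (LinearMap.ker (projTanC V))
      + Module.finrank ℝ V = 2 * Module.finrank ℝ V := by
    have h := LinearMap.finrank_range_add_finrank_ker (projTanC V)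
    rw [LinearMap.range_eq_top.mpr hsurjTan, finrank_top, htotal,
      Module.finrank_baseChange (S := ℝ) (M' := V)] at h
    omega
  have hkerTan_le_W : LinearMap.ker (projTanC V) ≤ W := by
    intro z hz
    rw [hmemW, LinearMap.mem_ker.mp hz]
    exact zero_mem _
  have hrankW : Module.finrank ℂ W
      = Module.finrank ℝ ↥U + Module.finrank ℝ V := by
    have h := finrank_map_add_finrank_inf_ker (projTanC V) W
    have hmap : Submodule.map (projTanC V) W = LinearMap.range (U.subtype.baseChange ℂ) := by
      rw [hWdef, Submodule.map_comap_eq, LinearMap.range_eq_top.mpr hsurjTan, top_inf_eq]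
    have hinf : LinearMap.ker (projTanC V) ⊓ W = LinearMap.ker (projTanC V) :=
      inf_eq_left.mpr hkerTan_le_W
    rw [hmap, hrankTU, hinf] at h
    have h2 := hrankkerTan
    omega
  -- kernel of Φ on E ⊓ W
  have hkerΦW : LinearMap.ker Φ ⊓ W = K := by
    ext z
    simp only [Submodule.mem_inf, LinearMap.mem_ker, hmemK]
    constructor
    · rintro ⟨hz0, hzW⟩
      obtain ⟨α, hα⟩ := (hmemW z).mp hzW
      have h1 : p.baseChange ℂ (projTanC V z) = 0 := by
        rw [← hΦ1, hz0, map_zero]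
      have h2 : U.subtype.dualMap.baseChange ℂ (projCotC V z) = 0 := by
        rw [← hΦ2, hz0, map_zero]
      refine ⟨?_, h2⟩
      rw [← hα] at h1 ⊢
      rw [hpιC] at h1
      rw [h1, map_zero]
    · rintro ⟨h1, h2⟩
      constructor
      · refine heqU _ _ ?_ ?_
        · rw [hΦ1, h1, map_zero, map_zero]
        · rw [hΦ2, h2, map_zero]
      · rw [hmemW, h1]
        exact zero_mem _
  have hkerΦEW : LinearMap.ker Φ ⊓ (E ⊓ W) = E ⊓ K := by
    rw [inf_left_comm, hkerΦW]
  -- rank computation for F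
  have hrankEW : Module.finrank ℂ ↥(E ⊓ W)
      = Module.finrank ℂ ↥(Submodule.map Φ (E ⊓ W)) + Module.finrank ℂ ↥(E ⊓ K) := by
    have h := finrank_map_add_finrank_inf_ker Φ (E ⊓ W)
    rw [hkerΦEW] at h
    omega
  have hsupEW : Module.finrank ℂ ↥(E ⊔ W) + Module.finrank ℂ ↥(E ⊓ K)
      = 2 * Module.finrank ℝ V := by
    have h := LinearMap.BilinForm.finrank_add_finrank_orthogonal hBrefl (E ⊔ W)
    rw [horthtop, inf_bot_eq, finrank_bot, add_zero, htotal, horthsup] at h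
    exact h
  have hsupinf := Submodule.finrank_sup_add_finrank_inf_eq E W
  -- final assembly
  refine ⟨Submodule.map Φ (E ⊓ W), ?_, ?_, ?_⟩
  · ext w
    simp only [SetLike.mem_coe, Submodule.mem_map, Set.mem_setOf_eq]
    constructor
    · rintro ⟨z, ⟨hzE, hzW⟩, rfl⟩
      obtain ⟨α, hα⟩ := (hmemW z).mp hzW
      refine ⟨z, hzE, ?_, hΦ2 z⟩
      rw [hΦ1, ← hα, hpιC]
    · rintro ⟨z, hzE, h1, h2⟩
      have hzW : z ∈ W := by
        rw [hmemW, h1]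
        exact ⟨_, rfl⟩
      refine ⟨z, ⟨hzE, hzW⟩, ?_⟩
      refine heqU _ _ ?_ ?_
      · rw [hΦ1, h1, hpιC]
      · rw [hΦ2, h2]
  · rintro x ⟨z, hz, rfl⟩ y ⟨z', hz', rfl⟩
    calc stdPairingC ↥U (Φ z) (Φ z')
        = stdPairingC V
          (((U.subtype.comp p).prodMap
            (LinearMap.id : (V →ₗ[ℝ] ℝ) →ₗ[ℝ] (V →ₗ[ℝ] ℝ))).baseChange ℂ z)
          (((U.subtype.comp p).prodMap
            (LinearMap.id : (V →ₗ[ℝ] ℝ) →ₗ[ℝ] (V →ₗ[ℝ] ℝ))).baseChange ℂ z') :=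
          pair_transfer V p U.subtype z z'
      _ = stdPairingC V z z' := by rw [hΨfix z hz.2, hΨfix z' hz'.2]
      _ = 0 := hiso z hz.1 z' hz'.1
  · omega
end
end
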